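/- Let R be a finite, reduced, crystallographic root system spanning a finite-dimensional real inner product space V, with base S and positive roots R⁺, and let S_P ⊆ S with R_P⁺ the set of positive roots that are nonnegative integer combinations of elements of S_P. Let β ∈ S∖S_P and suppose β^∨ + γ and β^∨ + γ + n·α^∨ are both coroots of roots of R, where α ∈ S_P, n is a positive integer, and γ is a nonnegative integer combination of coroots of elements of S_P. Then β^∨ + γ + m·α^∨ is the coroot of a root of R for every integer m with 0 ≤ m ≤ n. Consequently, every maximal string of coroots for S_P and β with a jump can be completed, by filling all its gaps, into a maximal good string of coroots for S_P and β. -/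

import Mathlib

open scoped RealInnerProductSpace

/-- A finite, reduced, crystallographic root system `R` spanning a
finite-dimensional real inner product space `V`, together with a base `S`
(the simple roots), the corresponding set `Rpos` of positive roots,
the integer coefficients `coeff α γ` of a root `α` in the base `S`,
the integer coefficients `ccoeff α γ` of the coroot `α^∨ = (2/(α,α))•α` of a
positive root in the simple coroots, and the integer Cartan pairings
`cartan α β = ⟨α, β^∨⟩ = 2(α,β)/(β,β)`. -/
structure RootSystemWithBase (V : Type*) [NormedAddCommGroup V]
    [InnerProductSpace ℝ V] [FiniteDimensional ℝ V] where
  R : Finset V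
  S : Finset V
  Rpos : Finset V
  coeff : V → V → ℤ
  ccoeff : V → V → ℤ
  cartan : V → V → ℤ
  root_ne_zero : ∀ α ∈ R, α ≠ (0 : V)
  span_top : Submodule.span ℝ (R : Set V) = ⊤
  neg_mem : ∀ α ∈ R, -α ∈ R
  reduced : ∀ α ∈ R, ∀ c : ℝ, c • α ∈ (R : Set V) → c = 1 ∨ c = -1
  cartan_eq : ∀ α ∈ R, ∀ β ∈ R, (cartan α β : ℝ) = 2 * ⟪α, β⟫ / ⟪β, β⟫
  reflect_mem : ∀ α ∈ R, ∀ β ∈ R, β - cartan β α • α ∈ R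
  S_subset : ∀ γ ∈ S, γ ∈ Rpos
  Rpos_subset : ∀ α ∈ Rpos, α ∈ R
  S_indep : LinearIndependent ℝ (Subtype.val : {x // x ∈ S} → V)
  root_eq_sum : ∀ α ∈ R, α = ∑ γ ∈ S, coeff α γ • γ
  mem_Rpos_iff : ∀ α ∈ R, (α ∈ Rpos ↔ ∀ γ ∈ S, 0 ≤ coeff α γ)
  pos_or_neg : ∀ α ∈ R, α ∈ Rpos ∨ -α ∈ Rpos
  coroot_eq_sum : ∀ α ∈ Rpos,
    (2 / ⟪α, α⟫) • α = ∑ γ ∈ S, ccoeff α γ • ((2 / ⟪γ, γ⟫) • γ)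
  ccoeff_nonneg : ∀ α ∈ Rpos, ∀ γ ∈ S, 0 ≤ ccoeff α γ

namespace RootSystemWithBase

variable {V : Type*} [NormedAddCommGroup V] [InnerProductSpace ℝ V]
  [FiniteDimensional ℝ V] (D : RootSystemWithBase V)

/-- The coroot `α^∨ = 2α/(α,α)` of a root `α`. -/
noncomputable def coroot (_D : RootSystemWithBase V) (α : V) : V := (2 / ⟪α, α⟫) • α

/-- The height of the coroot of a positive root: the sum of its coefficients
in the basis of simple coroots. -/
def ht (α : V) : ℤ := ∑ γ ∈ D.S, D.ccoeff α γ

open Classical in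
/-- `R_P⁺`: the positive roots that are nonnegative integer combinations of
the elements of `SP`. -/
noncomputable def RP (SP : Finset V) : Finset V :=
  D.Rpos.filter fun α => ∃ c : V → ℤ, (∀ γ, 0 ≤ c γ) ∧ α = ∑ γ ∈ SP, c γ • γ

/-- `n_β := 2 - ⟨Σ_{α ∈ R_P⁺} α, β^∨⟩`. -/
noncomputable def n (SP : Finset V) (β : V) : ℤ := 2 - ∑ α ∈ D.RP SP, D.cartan α β

/-- The reflection `s_α` in a root `α`, as a map `V → V`. -/
noncomputable def refl (_D : RootSystemWithBase V) (α : V) (x : V) : V := x - (2 * ⟪x, α⟫ / ⟪α, α⟫) • α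

/-- `w : V → V` can be written as a composition of `t` simple reflections. -/
noncomputable def IsWord (w : V → V) (t : ℕ) : Prop :=
  ∃ b : Fin t → V, (∀ i, b i ∈ D.S) ∧
    w = (List.ofFn fun i => D.refl (b i)).foldr (· ∘ ·) id

/-- Membership in the Weyl group `W` (as a group of maps `V → V`): `w` is a
composition of simple reflections. -/
noncomputable def MemW (w : V → V) : Prop := ∃ t, D.IsWord w t

/-- The length of an element of the Weyl group: the smallest number of simple
reflections needed to express it. -/
noncomputable def len (w : V → V) : ℕ := sInf {t | D.IsWord w t}

/-- The inversion set `I(w) = {α ∈ R⁺ : w(α) ∈ -R⁺}`. -/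
def inversions (w : V → V) : Set V := {α | α ∈ D.Rpos ∧ -(w α) ∈ D.Rpos}

/-- `W^j = {w ∈ W : I(w) ⊆ R⁺ ∖ R_j}`, the minimal length representatives of
`W/W_j`, where `R_j` is the set of roots lying in the span of `S ∖ {β}`. -/
noncomputable def Wj (β : V) : Set (V → V) :=
  {w | D.MemW w ∧
    ∀ α ∈ D.inversions w, α ∉ Submodule.span ℝ ((D.S : Set V) \ {β})}

end RootSystemWithBase


section CSAux

open Finset
open scoped Classical

variable {V : Type*} [NormedAddCommGroup V] [InnerProductSpace ℝ V]
  [FiniteDimensional ℝ V] (D : RootSystemWithBase V)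

namespace RootSystemWithBase

lemma CS.inner_self_pos' {v : V} (h : v ≠ 0) : 0 < ⟪v,v⟫ := by
  rcases lt_or_eq_of_le (real_inner_self_nonneg (x := v)) with h'|h'
  · exact h'
  · exact absurd (inner_self_eq_zero.1 h'.symm) h

lemma norm2_pos {r : V} (hr : r ∈ D.R) : 0 < ⟪r,r⟫ :=
  CS.inner_self_pos' (D.root_ne_zero r hr)

lemma coroot_def (r : V) : D.coroot r = (2/⟪r,r⟫) • r := rfl

lemma coroot_neg (r : V) : D.coroot (-r) = - D.coroot r := by
  rw [coroot_def, coroot_def, inner_neg_neg, smul_neg]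

/-- Reflection at the level of coroots: `(s_λ μ)^∨ = μ^∨ - ⟨λ,μ^∨⟩ λ^∨`. -/
lemma coroot_reflect {lam mu : V} (hl : lam ∈ D.R) (hm : mu ∈ D.R) :
    ∃ ν ∈ D.R, D.coroot ν = D.coroot mu - (D.cartan lam mu : ℝ) • D.coroot lam := by
  refine ⟨mu - D.cartan mu lam • lam, D.reflect_mem lam hl mu hm, ?_⟩
  have hll := D.norm2_pos hl
  have hmm := D.norm2_pos hm
  have hbe : (D.cartan mu lam : ℝ) = 2*⟪mu,lam⟫/⟪lam,lam⟫ := D.cartan_eq mu hm lam hl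
  have hae : (D.cartan lam mu : ℝ) = 2*⟪lam,mu⟫/⟪mu,mu⟫ := D.cartan_eq lam hl mu hm
  set b : ℝ := (D.cartan mu lam : ℝ) with hbdef
  have hz : (D.cartan mu lam • lam : V) = b • lam := (Int.cast_smul_eq_zsmul ℝ _ _).symm
  rw [hz]
  have hblam : b * ⟪lam,lam⟫ = 2*⟪mu,lam⟫ := by
    rw [hbe]; field_simp
  have hblam' : b * ⟪lam,lam⟫ = 2*⟪lam,mu⟫ := by rw [hblam, real_inner_comm lam mu]
  have hnorm : ⟪mu - b•lam, mu - b•lam⟫ = ⟪mu,mu⟫ := by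
    simp only [inner_sub_left, inner_sub_right, real_inner_smul_left, real_inner_smul_right,
      real_inner_comm lam mu]
    linear_combination b * hblam'
  rw [coroot_def, hnorm, coroot_def, coroot_def, smul_sub, smul_smul, smul_smul]
  congr 1
  rw [hae, hbe, real_inner_comm lam mu]
  field_simp

/-- If `⟨λ^∨, μ^∨⟩ < 0` and `λ^∨ + μ^∨ ≠ 0` then `λ^∨ + μ^∨` is again a coroot. -/
lemma add_coroot {lam mu : V} (hl : lam ∈ D.R) (hm : mu ∈ D.R)
    (hneg : ⟪lam, mu⟫ < 0) (hne : D.coroot lam + D.coroot mu ≠ 0) :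
    ∃ ν ∈ D.R, D.coroot ν = D.coroot lam + D.coroot mu := by
  have hll := D.norm2_pos hl
  have hmm := D.norm2_pos hm
  have hae : (D.cartan lam mu : ℝ) = 2*⟪lam,mu⟫/⟪mu,mu⟫ := D.cartan_eq lam hl mu hm
  have hbe : (D.cartan mu lam : ℝ) = 2*⟪mu,lam⟫/⟪lam,lam⟫ := D.cartan_eq mu hm lam hl
  have ha1 : D.cartan lam mu ≤ -1 := by
    have h0 : (D.cartan lam mu : ℝ) < 0 := by
      rw [hae]; exact div_neg_of_neg_of_pos (by linarith) hmm
    have : D.cartan lam mu < 0 := by exact_mod_cast h0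
    omega
  have hb1 : D.cartan mu lam ≤ -1 := by
    have h0 : (D.cartan mu lam : ℝ) < 0 := by
      rw [hbe, real_inner_comm lam mu]; exact div_neg_of_neg_of_pos (by linarith) hll
    have : D.cartan mu lam < 0 := by exact_mod_cast h0
    omega
  by_cases hA : D.cartan lam mu = -1
  · obtain ⟨ν, hν, he⟩ := D.coroot_reflect hl hm
    refine ⟨ν, hν, ?_⟩
    rw [he, hA]
    push_cast
    rw [neg_one_smul, sub_neg_eq_add, add_comm]
  by_cases hB : D.cartan mu lam = -1
  · obtain ⟨ν, hν, he⟩ := D.coroot_reflect hm hl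
    refine ⟨ν, hν, ?_⟩
    rw [he, hB]
    push_cast
    rw [neg_one_smul, sub_neg_eq_add]
  exfalso
  have ha2 : D.cartan lam mu ≤ -2 := by omega
  have hb2 : D.cartan mu lam ≤ -2 := by omega
  have hprod : (4:ℝ) ≤ (D.cartan lam mu : ℝ) * (D.cartan mu lam : ℝ) := by
    have h1 : (D.cartan lam mu : ℝ) ≤ -2 := by exact_mod_cast ha2
    have h2 : (D.cartan mu lam : ℝ) ≤ -2 := by exact_mod_cast hb2
    nlinarith
  rw [hae, hbe, real_inner_comm lam mu] at hprod
  -- so ⟪lam,lam⟫ * ⟪mu,mu⟫ ≤ ⟪lam,mu⟫ ^ 2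
  have hCS : ⟪lam,lam⟫ * ⟪mu,mu⟫ ≤ ⟪lam,mu⟫ * ⟪lam,mu⟫ := by
    have h4 : 4 * (⟪lam,mu⟫ * ⟪lam,mu⟫) / (⟪mu,mu⟫ * ⟪lam,lam⟫) ≥ 4 := by
      calc (4:ℝ) ≤ _ := hprod
      _ = 4 * (⟪lam,mu⟫ * ⟪lam,mu⟫) / (⟪mu,mu⟫ * ⟪lam,lam⟫) := by ring
    have := (le_div_iff₀ (by positivity)).1 h4
    nlinarith
  set t : ℝ := ⟪lam,mu⟫/⟪lam,lam⟫ with ht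
  have hsq : ⟪mu - t•lam, mu - t•lam⟫ ≤ 0 := by
    simp only [inner_sub_left, inner_sub_right, real_inner_smul_left, real_inner_smul_right,
      real_inner_comm lam mu]
    rw [ht]
    have hL : ⟪lam,lam⟫ ≠ 0 := ne_of_gt hll
    field_simp
    nlinarith
  have hz : mu - t•lam = 0 :=
    inner_self_eq_zero.1 (le_antisymm hsq real_inner_self_nonneg)
  have hmu : mu = t • lam := sub_eq_zero.1 hz
  rcases D.reduced lam hl t (by rw [← hmu]; exact_mod_cast hm) with h1|h1
  · rw [h1, one_smul] at hmu
    rw [hmu] at hneg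
    linarith
  · rw [h1, neg_one_smul] at hmu
    apply hne
    simp [hmu, coroot_neg]


lemma S_sum_eq_zero {g : V → ℝ} (h : ∑ γ ∈ D.S, g γ • γ = 0) : ∀ γ ∈ D.S, g γ = 0 := by
  have hind := linearIndependent_iff'.1 D.S_indep Finset.univ (fun i => g i.val)
  intro γ hγ
  refine hind ?_ ⟨γ, hγ⟩ (Finset.mem_univ _)
  rw [← h, ← Finset.sum_coe_sort D.S (fun γ => g γ • γ)]

lemma S_coroot_sum_eq_zero {g : V → ℝ} (h : ∑ γ ∈ D.S, g γ • D.coroot γ = 0) :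
    ∀ γ ∈ D.S, g γ = 0 := by
  intro γ hγ
  have h2 : ∑ γ ∈ D.S, (g γ * (2/⟪γ,γ⟫)) • γ = 0 := by
    rw [← h]
    exact Finset.sum_congr rfl fun x hx => by rw [mul_smul]; rfl
  have h3 := D.S_sum_eq_zero h2 γ hγ
  have hγR : γ ∈ D.R := D.Rpos_subset _ (D.S_subset _ hγ)
  have hne : (2/⟪γ,γ⟫ : ℝ) ≠ 0 := by have := D.norm2_pos hγR; positivity
  exact (mul_eq_zero.1 h3).resolve_right hne

lemma S_coroot_int_sum_eq_zero {g : V → ℤ} (h : ∑ γ ∈ D.S, g γ • D.coroot γ = 0) :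
    ∀ γ ∈ D.S, g γ = 0 := by
  intro γ hγ
  have h2 : ∑ γ ∈ D.S, ((g γ : ℝ)) • D.coroot γ = 0 := by
    rw [← h]; exact Finset.sum_congr rfl fun x _ => Int.cast_smul_eq_zsmul ℝ _ _
  exact_mod_cast D.S_coroot_sum_eq_zero h2 γ hγ

/-- `β^∨ + ∑_{δ ∈ SP} c δ • δ^∨`. -/
noncomputable def sval (SP : Finset V) (β : V) (c : V → ℤ) : V :=
  D.coroot β + ∑ δ ∈ SP, c δ • D.coroot δ

variable (SP : Finset V) (β : V)

lemma sval_congr {c c' : V → ℤ} (h : ∀ δ ∈ SP, c δ = c' δ) :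
    D.sval SP β c = D.sval SP β c' := by
  unfold sval; congr 1; exact Finset.sum_congr rfl fun x hx => by rw [h x hx]

lemma sval_bump {δ : V} (hδ : δ ∈ SP) (c : V → ℤ) (t : ℤ) :
    D.sval SP β (fun x => if x = δ then c x + t else c x)
      = D.sval SP β c + t • D.coroot δ := by
  unfold sval
  rw [add_assoc]
  congr 1
  have key : ∀ x ∈ SP, (if x = δ then c x + t else c x) • D.coroot x
      = c x • D.coroot x + (if x = δ then t • D.coroot x else 0) := by
    intro x hx; by_cases h : x = δ <;> simp [h, add_smul]
  rw [Finset.sum_congr rfl key, Finset.sum_add_distrib]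
  congr 1
  rw [Finset.sum_ite_eq' SP δ (fun x => t • D.coroot x)]
  simp [hδ]

lemma sval_expand (hSP : SP ⊆ D.S) (hβS : β ∈ D.S) (c : V → ℤ) :
    D.sval SP β c
      = ∑ γ ∈ D.S, (((if γ = β then 1 else 0) + (if γ ∈ SP then c γ else 0)) : ℤ) • D.coroot γ := by
  have key : ∀ γ ∈ D.S,
      (((if γ = β then 1 else 0) + (if γ ∈ SP then c γ else 0)) : ℤ) • D.coroot γ
      = (if γ = β then D.coroot γ else 0) + (if γ ∈ SP then c γ • D.coroot γ else 0) := by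
    intro γ _; by_cases h1 : γ = β <;> by_cases h2 : γ ∈ SP <;> simp [h1, h2, add_smul]
  rw [Finset.sum_congr rfl key, Finset.sum_add_distrib]
  unfold sval
  congr 1
  · rw [Finset.sum_ite_eq' D.S β (fun γ => D.coroot γ)]
    simp [hβS]
  · rw [Finset.sum_ite_mem, Finset.inter_eq_right.2 hSP]

lemma sval_ne_zero (hSP : SP ⊆ D.S) (hβS : β ∈ D.S) (hβP : β ∉ SP) (c : V → ℤ) :
    D.sval SP β c ≠ 0 := by
  intro h
  rw [D.sval_expand SP β hSP hβS c] at h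
  have := D.S_coroot_int_sum_eq_zero h β hβS
  simp [hβP] at this

lemma coroot_eq_sum' {r : V} (hr : r ∈ D.Rpos) :
    D.coroot r = ∑ γ ∈ D.S, D.ccoeff r γ • D.coroot γ := D.coroot_eq_sum r hr

lemma pos_of_coroot_eq (hSP : SP ⊆ D.S) (hβS : β ∈ D.S) (hβP : β ∉ SP)
    {r : V} {c : V → ℤ} (hr : r ∈ D.R)
    (h : D.coroot r = D.sval SP β c) : r ∈ D.Rpos := by
  rcases D.pos_or_neg r hr with h'|h'
  · exact h'
  exfalso
  have hs := D.coroot_eq_sum' h'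
  rw [D.coroot_neg, h] at hs
  have h0 : ∑ γ ∈ D.S, ((((if γ = β then 1 else 0) + (if γ ∈ SP then c γ else 0)) : ℤ)
      + D.ccoeff (-r) γ) • D.coroot γ = 0 := by
    rw [Finset.sum_congr rfl (fun γ _ => add_smul _ _ _), Finset.sum_add_distrib,
      ← D.sval_expand SP β hSP hβS c, ← hs]
    simp
  have h1 := D.S_coroot_int_sum_eq_zero h0 β hβS
  simp [hβP] at h1
  have h2 := D.ccoeff_nonneg (-r) h' β hβS
  omega

lemma ht_eq' (hSP : SP ⊆ D.S) (hβS : β ∈ D.S) (hβP : β ∉ SP)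
    {r : V} {c : V → ℤ} (hr : r ∈ D.Rpos)
    (h : D.coroot r = D.sval SP β c) : D.ht r = 1 + ∑ δ ∈ SP, c δ := by
  have hs := D.coroot_eq_sum' hr
  rw [h, D.sval_expand SP β hSP hβS c] at hs
  have h0 : ∑ γ ∈ D.S, ((((if γ = β then 1 else 0) + (if γ ∈ SP then c γ else 0)) : ℤ)
      - D.ccoeff r γ) • D.coroot γ = 0 := by
    rw [Finset.sum_congr rfl (fun γ _ => sub_smul _ _ _), Finset.sum_sub_distrib, hs, sub_self]
  have hcc : ∀ γ ∈ D.S, D.ccoeff r γ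
      = (if γ = β then 1 else 0) + (if γ ∈ SP then c γ else 0) := by
    intro γ hγ
    have := D.S_coroot_int_sum_eq_zero h0 γ hγ
    omega
  unfold ht
  rw [Finset.sum_congr rfl hcc, Finset.sum_add_distrib]
  congr 1
  · rw [Finset.sum_ite_eq' D.S β (fun _ => (1:ℤ))]
    simp [hβS]
  · rw [Finset.sum_ite_mem, Finset.inter_eq_right.2 hSP]

lemma coroot_inj {r s : V} (hr : r ≠ 0) (hs : s ≠ 0) (h : D.coroot r = D.coroot s) :
    r = s := by
  have hr2 := CS.inner_self_pos' hr
  have hs2 := CS.inner_self_pos' hs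
  have hn : ∀ t : V, t ≠ 0 → ⟪D.coroot t, D.coroot t⟫ = 4/⟪t,t⟫ := by
    intro t ht
    have ht2 := CS.inner_self_pos' ht
    rw [coroot_def, real_inner_smul_left, real_inner_smul_right]
    field_simp
    ring
  have he : ⟪r,r⟫ = ⟪s,s⟫ := by
    have h4 : (4:ℝ)/⟪r,r⟫ = 4/⟪s,s⟫ := by rw [← hn r hr, ← hn s hs, h]
    field_simp at h4
    linarith
  have h' := h
  rw [coroot_def, coroot_def, ← he] at h'
  exact smul_right_injective V (by positivity : (2/⟪r,r⟫:ℝ) ≠ 0) h'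


lemma sum_bump {δ : V} (hδ : δ ∈ SP) (c : V → ℤ) (t : ℤ) :
    ∑ x ∈ SP, (if x = δ then c x + t else c x) = (∑ x ∈ SP, c x) + t := by
  have key : ∀ x ∈ SP, (if x = δ then c x + t else c x) = c x + (if x = δ then t else 0) := by
    intro x _; by_cases h : x = δ <;> simp [h]
  rw [Finset.sum_congr rfl key, Finset.sum_add_distrib, Finset.sum_ite_eq' SP δ (fun _ => t)]
  simp [hδ]

lemma chain (hSP : SP ⊆ D.S) (hβS : β ∈ D.S) (hβP : β ∉ SP) :
    ∀ d : ℕ, ∀ c c' : V → ℤ,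
      (∀ δ ∈ SP, 0 ≤ c δ ∧ c δ ≤ c' δ) →
      ((∑ δ ∈ SP, (c' δ - c δ)) = (d : ℤ)) →
      (∃ r ∈ D.R, D.coroot r = D.sval SP β c) →
      (∃ r ∈ D.R, D.coroot r = D.sval SP β c') →
      ∃ f : ℕ → V → ℤ,
        (∀ δ ∈ SP, f 0 δ = c δ) ∧ (∀ δ ∈ SP, f d δ = c' δ) ∧
        ∀ k, k ≤ d → (∀ δ ∈ SP, c δ ≤ f k δ ∧ f k δ ≤ c' δ) ∧
          ((∑ δ ∈ SP, f k δ) = (∑ δ ∈ SP, c δ) + (k : ℤ)) ∧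
          ∃ r ∈ D.R, D.coroot r = D.sval SP β (f k) := by
  intro d
  induction d with
  | zero =>
    intro c c' hb hsum hc hc'
    refine ⟨fun _ => c, fun _ _ => rfl, ?_, ?_⟩
    · intro δ hδ
      have h0 : ∀ δ ∈ SP, 0 ≤ c' δ - c δ := fun δ hδ => by have := hb δ hδ; omega
      have := (Finset.sum_eq_zero_iff_of_nonneg h0).1 (by exact_mod_cast hsum) δ hδ
      show c δ = c' δ
      omega
    · intro k hk
      have hk0 : k = 0 := Nat.le_zero.1 hk
      subst hk0
      exact ⟨fun δ hδ => ⟨le_refl _, (hb δ hδ).2⟩, by simp, hc⟩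
  | succ d ih =>
    intro c c' hb hsum hc hc'
    obtain ⟨r, hrR, hrc⟩ := hc
    obtain ⟨r', hr'R, hr'c⟩ := hc'
    set w : V := D.sval SP β c' - D.sval SP β c with hwdef
    have hsubZ : w = ∑ δ ∈ SP, (c' δ - c δ) • D.coroot δ := by
      rw [hwdef]
      unfold sval
      rw [add_sub_add_left_eq_sub, ← Finset.sum_sub_distrib]
      exact Finset.sum_congr rfl fun x _ => (sub_smul _ _ _).symm
    have hsub : w = ∑ δ ∈ SP, ((c' δ - c δ : ℤ) : ℝ) • D.coroot δ := by
      rw [hsubZ]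
      exact Finset.sum_congr rfl fun x _ => (Int.cast_smul_eq_zsmul ℝ _ _).symm
    have hwne : w ≠ 0 := by
      intro h0
      have hzero : ∑ γ ∈ D.S, (if γ ∈ SP then c' γ - c γ else 0) • D.coroot γ = 0 := by
        have key : ∀ γ ∈ D.S, (if γ ∈ SP then c' γ - c γ else 0) • D.coroot γ
            = (if γ ∈ SP then (c' γ - c γ) • D.coroot γ else 0) := by
          intro γ _; by_cases h : γ ∈ SP <;> simp [h]
        rw [Finset.sum_congr rfl key, Finset.sum_ite_mem, Finset.inter_eq_right.2 hSP,
          ← hsubZ, h0]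
      have hext := D.S_coroot_int_sum_eq_zero hzero
      have hall : ∀ δ ∈ SP, c' δ - c δ = 0 := by
        intro δ hδ
        have := hext δ (hSP hδ)
        simpa [hδ] using this
      have h2 : ∑ δ ∈ SP, (c' δ - c δ) = 0 := Finset.sum_eq_zero hall
      rw [h2] at hsum
      omega
    have hww : 0 < ⟪w, w⟫ := CS.inner_self_pos' hwne
    have key : ⟪D.sval SP β c', w⟫ - ⟪D.sval SP β c, w⟫ = ⟪w,w⟫ := by
      rw [← inner_sub_left, ← hwdef]
    have hexp : ∀ x : V, ⟪x, w⟫ = ∑ δ ∈ SP, ((c' δ - c δ : ℤ) : ℝ) * ⟪x, D.coroot δ⟫ := by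
      intro x
      rw [hsub, inner_sum]
      exact Finset.sum_congr rfl fun δ _ => real_inner_smul_right _ _ _
    rcases lt_or_ge ⟪D.sval SP β c, w⟫ 0 with hA | hge
    · -- can add a simple coroot to the bottom
      rw [hexp] at hA
      have hex : ∃ δ ∈ SP, ((c' δ - c δ : ℤ) : ℝ) * ⟪D.sval SP β c, D.coroot δ⟫ < 0 := by
        by_contra hcon
        push_neg at hcon
        exact absurd (Finset.sum_nonneg hcon) (not_le.2 hA)
      obtain ⟨δ, hδSP, hδneg⟩ := hex
      have hfac : (0:ℝ) ≤ ((c' δ - c δ : ℤ) : ℝ) := by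
        have := (hb δ hδSP).2; exact_mod_cast sub_nonneg.2 this
      have hinner : ⟪D.sval SP β c, D.coroot δ⟫ < 0 := by
        rcases lt_or_ge ⟪D.sval SP β c, D.coroot δ⟫ 0 with h|h
        · exact h
        · nlinarith
      have hcd : c δ < c' δ := by
        by_contra h''
        push_neg at h''
        have he : c' δ - c δ = 0 := by have := (hb δ hδSP).2; omega
        rw [he] at hδneg
        simp at hδneg
      have hδS := hSP hδSP
      have hδR : δ ∈ D.R := D.Rpos_subset _ (D.S_subset _ hδS)
      have hrr := D.norm2_pos hrR
      have hδδ := D.norm2_pos hδR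
      have hinner2 : ⟪r, δ⟫ < 0 := by
        have hcc : ⟪D.coroot r, D.coroot δ⟫ = (2/⟪r,r⟫)*((2/⟪δ,δ⟫)*⟪r,δ⟫) := by
          rw [coroot_def, coroot_def, real_inner_smul_left, real_inner_smul_right]
        rw [hrc] at hcc
        rw [hcc] at hinner
        rcases lt_or_ge ⟪r, δ⟫ 0 with h|h
        · exact h
        · exfalso
          have h1 : (0:ℝ) < 2/⟪r,r⟫ := by positivity
          have h2 : (0:ℝ) < 2/⟪δ,δ⟫ := by positivity
          have t1 : (0:ℝ) ≤ (2/⟪δ,δ⟫)*⟪r,δ⟫ := mul_nonneg h2.le h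
          have t2 : (0:ℝ) ≤ (2/⟪r,r⟫)*((2/⟪δ,δ⟫)*⟪r,δ⟫) := mul_nonneg h1.le t1
          linarith
      have hne0 : D.coroot r + D.coroot δ ≠ 0 := by
        rw [hrc]
        intro hcontr
        apply D.sval_ne_zero SP β hSP hβS hβP (fun x => if x = δ then c x + 1 else c x)
        rw [D.sval_bump SP β hδSP c 1, one_zsmul, hcontr]
      obtain ⟨ν, hνR, hνc⟩ := D.add_coroot hrR hδR hinner2 hne0
      set c₁ : V → ℤ := fun x => if x = δ then c x + 1 else c x with hc₁
      have hsv1 : D.sval SP β c₁ = D.sval SP β c + D.coroot δ := by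
        rw [hc₁, D.sval_bump SP β hδSP c 1, one_zsmul]
      have hνc' : D.coroot ν = D.sval SP β c₁ := by rw [hsv1, hνc, hrc]
      have hb1 : ∀ ε ∈ SP, 0 ≤ c₁ ε ∧ c₁ ε ≤ c' ε := by
        intro ε hε
        have h1 := hb ε hε
        by_cases h : ε = δ
        · subst h; simp only [hc₁, if_pos rfl]; omega
        · simp only [hc₁, if_neg h]; omega
      have hsum1 : ∑ ε ∈ SP, (c' ε - c₁ ε) = (d : ℤ) := by
        have he : ∑ ε ∈ SP, (c' ε - c₁ ε)
            = ∑ ε ∈ SP, (c' ε - c ε) - ∑ ε ∈ SP, (if ε = δ then (1:ℤ) else 0) := by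
          rw [← Finset.sum_sub_distrib]
          apply Finset.sum_congr rfl
          intro x _
          by_cases h : x = δ <;> simp [hc₁, h] <;> ring
        rw [he, hsum, Finset.sum_ite_eq' SP δ (fun _ => (1:ℤ))]
        simp only [if_pos hδSP]
        push_cast
        ring
      obtain ⟨f, hf0, hfd, hfk⟩ := ih c₁ c' hb1 hsum1 ⟨ν, hνR, hνc'⟩ ⟨r', hr'R, hr'c⟩
      refine ⟨fun k => if k = 0 then c else f (k-1), fun ε _ => by simp, ?_, ?_⟩
      · intro ε hε
        simpa using hfd ε hε
      · intro k hk
        by_cases hk0 : k = 0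
        · subst hk0
          simp only [if_pos rfl]
          exact ⟨fun ε hε => ⟨le_refl _, (hb ε hε).2⟩, by simp, r, hrR, hrc⟩
        · have hk1 : k - 1 ≤ d := by omega
          obtain ⟨hbk, hsumk, hck⟩ := hfk (k-1) hk1
          simp only [if_neg hk0]
          have hsc1 : ∑ ε ∈ SP, c₁ ε = (∑ ε ∈ SP, c ε) + 1 := sum_bump SP hδSP c 1
          refine ⟨fun ε hε => ⟨?_, (hbk ε hε).2⟩, ?_, hck⟩
          · refine le_trans ?_ (hbk ε hε).1
            by_cases h : ε = δ
            · subst h; simp only [hc₁, if_pos rfl]; omega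
            · simp [hc₁, h]
          · rw [hsumk, hsc1]
            have : ((k - 1 : ℕ) : ℤ) = (k : ℤ) - 1 := by omega
            rw [this]
            ring
    · -- can remove a simple coroot from the top
      have hB : 0 < ⟪D.sval SP β c', w⟫ := by linarith
      rw [hexp] at hB
      have hex : ∃ δ ∈ SP, 0 < ((c' δ - c δ : ℤ) : ℝ) * ⟪D.sval SP β c', D.coroot δ⟫ := by
        by_contra hcon
        push_neg at hcon
        exact absurd (Finset.sum_nonpos hcon) (not_le.2 hB)
      obtain ⟨δ, hδSP, hδpos⟩ := hex
      have hfac : (0:ℝ) ≤ ((c' δ - c δ : ℤ) : ℝ) := by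
        have := (hb δ hδSP).2; exact_mod_cast sub_nonneg.2 this
      have hinner : 0 < ⟪D.sval SP β c', D.coroot δ⟫ := by
        rcases le_or_gt ⟪D.sval SP β c', D.coroot δ⟫ 0 with h|h
        · nlinarith
        · exact h
      have hcd : c δ < c' δ := by
        by_contra h''
        push_neg at h''
        have he : c' δ - c δ = 0 := by have := (hb δ hδSP).2; omega
        rw [he] at hδpos
        simp at hδpos
      have hδS := hSP hδSP
      have hδR : δ ∈ D.R := D.Rpos_subset _ (D.S_subset _ hδS)
      have hr'' : -r' ∈ D.R := D.neg_mem r' hr'R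
      have hrr := D.norm2_pos hr'R
      have hδδ := D.norm2_pos hδR
      have hinner2 : ⟪-r', δ⟫ < 0 := by
        have hcc : ⟪D.coroot r', D.coroot δ⟫ = (2/⟪r',r'⟫)*((2/⟪δ,δ⟫)*⟪r',δ⟫) := by
          rw [coroot_def, coroot_def, real_inner_smul_left, real_inner_smul_right]
        rw [hr'c] at hcc
        rw [hcc] at hinner
        rw [inner_neg_left, neg_lt_zero]
        have h1 : (0:ℝ) < 2/⟪r',r'⟫ := by positivity
        have h2 : (0:ℝ) < 2/⟪δ,δ⟫ := by positivity
        by_contra hcon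
        push_neg at hcon
        have t1 : (2/⟪δ,δ⟫)*⟪r',δ⟫ ≤ 0 := mul_nonpos_of_nonneg_of_nonpos h2.le hcon
        have t2 : (2/⟪r',r'⟫)*((2/⟪δ,δ⟫)*⟪r',δ⟫) ≤ 0 := mul_nonpos_of_nonneg_of_nonpos h1.le t1
        linarith
      set c₂ : V → ℤ := fun x => if x = δ then c' x + (-1) else c' x with hc₂
      have hsv2 : D.sval SP β c₂ = D.sval SP β c' - D.coroot δ := by
        rw [hc₂, D.sval_bump SP β hδSP c' (-1), neg_one_zsmul, ← sub_eq_add_neg]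
      have hne0 : D.coroot (-r') + D.coroot δ ≠ 0 := by
        rw [D.coroot_neg, hr'c]
        intro hcontr
        apply D.sval_ne_zero SP β hSP hβS hβP c₂
        rw [hsv2, sub_eq_zero]
        exact neg_add_eq_zero.1 hcontr
      obtain ⟨ν, hνR, hνc⟩ := D.add_coroot hr'' hδR hinner2 hne0
      have hν' : -ν ∈ D.R := D.neg_mem ν hνR
      have hνc' : D.coroot (-ν) = D.sval SP β c₂ := by
        rw [D.coroot_neg, hνc, D.coroot_neg, hr'c, hsv2]
        abel
      have hb2 : ∀ ε ∈ SP, 0 ≤ c ε ∧ c ε ≤ c₂ ε := by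
        intro ε hε
        have h1 := hb ε hε
        by_cases h : ε = δ
        · subst h; simp only [hc₂, if_pos rfl]; omega
        · simp only [hc₂, if_neg h]; omega
      have hsum2 : ∑ ε ∈ SP, (c₂ ε - c ε) = (d : ℤ) := by
        have he : ∑ ε ∈ SP, (c₂ ε - c ε)
            = ∑ ε ∈ SP, (c' ε - c ε) + ∑ ε ∈ SP, (if ε = δ then (-1:ℤ) else 0) := by
          rw [← Finset.sum_add_distrib]
          apply Finset.sum_congr rfl
          intro x _
          by_cases h : x = δ <;> simp [hc₂, h] <;> ring
        rw [he, hsum, Finset.sum_ite_eq' SP δ (fun _ => (-1:ℤ))]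
        simp only [if_pos hδSP]
        push_cast
        ring
      obtain ⟨f, hf0, hfd, hfk⟩ := ih c c₂ hb2 hsum2 ⟨r, hrR, hrc⟩ ⟨-ν, hν', hνc'⟩
      refine ⟨fun k => if k = d + 1 then c' else f k, ?_, fun ε _ => by simp, ?_⟩
      · intro ε hε
        simpa using hf0 ε hε
      · intro k hk
        by_cases hk0 : k = d + 1
        · subst hk0
          simp only [if_pos rfl]
          refine ⟨fun ε hε => ⟨(hb ε hε).2, le_refl _⟩, ?_, r', hr'R, hr'c⟩
          have := Finset.sum_sub_distrib (s := SP) (f := c') (g := c)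
          rw [this] at hsum
          push_cast
          omega
        · have hk1 : k ≤ d := by omega
          obtain ⟨hbk, hsumk, hck⟩ := hfk k hk1
          simp only [if_neg hk0]
          refine ⟨fun ε hε => ⟨(hbk ε hε).1, ?_⟩, hsumk, hck⟩
          refine le_trans (hbk ε hε).2 ?_
          by_cases h : ε = δ
          · subst h; simp only [hc₂, if_pos rfl]; omega
          · simp [hc₂, h]


end RootSystemWithBase

lemma CS.seqStrict {f : ℕ → ℤ} {L : ℕ} (h : ∀ i < L, f i < f (i+1)) :
    ∀ j, j ≤ L → ∀ i, i < j → f i < f j := by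
  intro j
  induction j with
  | zero => intro _ i hi; exact absurd hi (Nat.not_lt_zero i)
  | succ m ihm =>
    intro hjL i hi
    have hm : f m < f (m+1) := h m (by omega)
    rcases Nat.lt_succ_iff_lt_or_eq.1 hi with h'|h'
    · exact lt_trans (ihm (by omega) i h') hm
    · subst h'; exact hm

end CSAux

/-- Let `β ∈ S ∖ S_P` and suppose `β^∨ + γ` and
`β^∨ + γ + n·α^∨` are both coroots of roots of `R`, where `α ∈ S_P`, `n` is
a positive integer, and `γ` is a nonnegative integer combination of coroots
of elements of `S_P`.  Then `β^∨ + γ + m·α^∨` is the coroot of a root of `R`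
for every integer `0 ≤ m ≤ n`.  Consequently, every maximal string of
coroots for `S_P` and `β` with a jump can be completed, by filling all of
its gaps, into a maximal good string of coroots for `S_P` and `β`. -/
theorem coroot_string_unbroken_and_fill_gaps {V : Type*}
    [NormedAddCommGroup V] [InnerProductSpace ℝ V] [FiniteDimensional ℝ V]
    (D : RootSystemWithBase V)
    (SP : Finset V) (hSP : SP ⊆ D.S) (β : V) (hβS : β ∈ D.S) (hβP : β ∉ SP)
    (α : V) (hα : α ∈ SP) (n : ℤ) (hn : 0 < n)
    (c : V → ℤ) (hc : ∀ δ, 0 ≤ c δ) (γ : V)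
    (hγ : γ = ∑ δ ∈ SP, c δ • D.coroot δ)
    (h1 : ∃ r ∈ D.R, D.coroot r = D.coroot β + γ)
    (h2 : ∃ r ∈ D.R, D.coroot r = D.coroot β + γ + n • D.coroot α) :
    (∀ m : ℤ, 0 ≤ m → m ≤ n →
      ∃ r ∈ D.R, D.coroot r = D.coroot β + γ + m • D.coroot α) ∧
    -- every maximal string of coroots for `S_P` and `β` with a jump can be
    -- completed into a maximal good string of coroots for `S_P` and `β`
    (∀ (L : ℕ) (a : ℕ → V) (ca : ℕ → V → ℤ),
      a 0 = β →
      (∀ i ≤ L, a i ∈ D.Rpos) →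
      (∀ i ≤ L, (∀ δ, 0 ≤ ca i δ) ∧
        D.coroot (a i) = D.coroot β + ∑ δ ∈ SP, ca i δ • D.coroot δ) →
      (∀ i < L, D.ht (a i) < D.ht (a (i + 1))) →
      -- maximal: the length of the string is `n_β − 1`
      D.ht (a L) = D.n SP β - 1 →
      -- with a jump
      (∃ i < L, D.ht (a i) + 1 < D.ht (a (i + 1))) →
      ∃ (L' : ℕ) (a' : ℕ → V) (ca' : ℕ → V → ℤ),
        a' 0 = β ∧
        (∀ i ≤ L', a' i ∈ D.Rpos) ∧
        (∀ i ≤ L', (∀ δ, 0 ≤ ca' i δ) ∧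
          D.coroot (a' i) = D.coroot β + ∑ δ ∈ SP, ca' i δ • D.coroot δ) ∧
        -- good
        (∀ i ≤ L', D.ht (a' i) = (i : ℤ) + 1) ∧
        -- maximal
        D.ht (a' L') = D.n SP β - 1 ∧
        -- the completed string contains the original one
        (∀ i ≤ L, ∃ i' ≤ L', a' i' = a i)) := by
  classical
  have hβS : β ∈ D.S := hβS
  constructor
  · -- part 1 : the α-string of coroots is unbroken
    intro m hm0 hmn
    obtain ⟨r, hrR, hrc⟩ := h1
    obtain ⟨r', hr'R, hr'c⟩ := h2
    have hsv : D.sval SP β c = D.coroot β + γ := by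
      rw [hγ]; rfl
    set c' : V → ℤ := fun x => if x = α then c x + n else c x with hc'
    have hsv' : D.sval SP β c' = D.coroot β + γ + n • D.coroot α := by
      rw [hc', D.sval_bump SP β hα c n, hsv]
    have hb : ∀ δ ∈ SP, 0 ≤ c δ ∧ c δ ≤ c' δ := by
      intro δ hδ
      refine ⟨hc δ, ?_⟩
      by_cases h : δ = α
      · subst h; simp only [hc', if_pos rfl]; omega
      · simp [hc', h]
    have hd : ∑ δ ∈ SP, (c' δ - c δ) = ((n.toNat : ℕ) : ℤ) := by
      have key : ∀ δ ∈ SP, c' δ - c δ = if δ = α then n else 0 := by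
        intro δ _
        by_cases h : δ = α
        · subst h; simp [hc']
        · simp [hc', h]
      rw [Finset.sum_congr rfl key, Finset.sum_ite_eq' SP α (fun _ => n)]
      simp only [if_pos hα]
      omega
    obtain ⟨f, hf0, hfd, hfk⟩ := D.chain SP β hSP hβS hβP n.toNat c c' hb hd
      ⟨r, hrR, by rw [hrc, hsv]⟩ ⟨r', hr'R, by rw [hr'c, hsv']⟩
    set k := m.toNat with hkdef
    have hk : k ≤ n.toNat := by omega
    obtain ⟨hbk, hsumk, s, hsR, hsc⟩ := hfk k hk
    refine ⟨s, hsR, ?_⟩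
    rw [hsc]
    have hz : ∀ δ ∈ SP, δ ≠ α → f k δ - c δ = 0 := by
      intro δ hδ' hne
      have h1 := (hbk δ hδ').1
      have h2 := (hbk δ hδ').2
      simp only [hc', if_neg hne] at h2
      omega
    have hfα : ∀ δ ∈ SP, f k δ = if δ = α then c δ + m else c δ := by
      intro δ hδ
      by_cases h : δ = α
      · rw [if_pos h]
        have hSigma : ∑ ε ∈ SP, (f k ε - c ε) = m := by
          rw [Finset.sum_sub_distrib, hsumk]
          omega
        rw [Finset.sum_eq_single_of_mem α hα (fun b hb hne => hz b hb hne)] at hSigma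
        rw [h]
        omega
      · simp only [if_neg h]
        have := hz δ hδ h
        omega
    have heq : D.sval SP β (f k) = D.sval SP β (fun x => if x = α then c x + m else c x) :=
      D.sval_congr SP β (fun δ hδ => hfα δ hδ)
    rw [heq, D.sval_bump SP β hα c m, hsv]
  · -- part 2 : filling the gaps
    intro L a ca ha0 haPos haC hinc hmax _hjump
    have hβR : β ∈ D.R := D.Rpos_subset _ (D.S_subset _ hβS)
    have hb0 : D.coroot β = D.sval SP β (fun _ => 0) := by
      unfold RootSystemWithBase.sval
      simp
    have hht : ∀ i, i ≤ L → D.ht (a i) = 1 + ∑ δ ∈ SP, ca i δ := by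
      intro i hi
      exact D.ht_eq' SP β hSP hβS hβP (haPos i hi) ((haC i hi).2)
    have hh0 : D.ht (a 0) = 1 := by
      rw [ha0]
      have := D.ht_eq' SP β hSP hβS hβP (D.S_subset β hβS) hb0
      simpa using this
    have hstrict : ∀ j, j ≤ L → ∀ i, i < j → D.ht (a i) < D.ht (a j) :=
      CS.seqStrict (f := fun i => D.ht (a i)) (L := L) hinc
    have hlow : ∀ i, i ≤ L → 1 ≤ D.ht (a i) := by
      intro i hi
      rcases Nat.eq_zero_or_pos i with h|h
      · subst h; omega
      · have := hstrict i hi 0 h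
        omega
    have hmono : ∀ i, i ≤ L → D.ht (a i) ≤ D.ht (a L) := by
      intro i hi
      rcases eq_or_lt_of_le hi with h|h
      · subst h; exact le_refl _
      · exact le_of_lt (hstrict L le_rfl i h)
    have hinj : ∀ i, i ≤ L → ∀ j, j ≤ L → D.ht (a i) = D.ht (a j) → i = j := by
      intro i hi j hj hij
      rcases lt_trichotomy i j with h|h|h
      · have := hstrict j hj i h; omega
      · exact h
      · have := hstrict i hi j h; omega
    have hL1 : 1 ≤ D.ht (a L) := hlow L le_rfl
    have claim : ∀ h : ℤ, ∃ (r : V) (cc : V → ℤ), 1 ≤ h → h ≤ D.ht (a L) →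
        (r ∈ D.Rpos ∧ (∀ δ, 0 ≤ cc δ) ∧ D.coroot r = D.sval SP β cc ∧ D.ht r = h ∧
          ∀ j, j ≤ L → D.ht (a j) = h → r = a j) := by
      intro h
      by_cases hex : ∃ j, j ≤ L ∧ D.ht (a j) = h
      · obtain ⟨j, hjL, hjh⟩ := hex
        refine ⟨a j, ca j, fun _ _ => ⟨haPos j hjL, (haC j hjL).1, (haC j hjL).2, hjh, ?_⟩⟩
        intro j' hj' hj'h
        rw [hinj j hjL j' hj' (by rw [hj'h, hjh])]
      · by_cases hh : 1 ≤ h ∧ h ≤ D.ht (a L)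
        · have hbnd : ∀ δ ∈ SP, 0 ≤ (0:ℤ) ∧ (0:ℤ) ≤ ca L δ :=
            fun δ _ => ⟨le_rfl, (haC L le_rfl).1 δ⟩
          have hdL : ∑ δ ∈ SP, (ca L δ - (fun _ => (0:ℤ)) δ)
              = (((D.ht (a L) - 1).toNat : ℕ) : ℤ) := by
            have h1 := hht L le_rfl
            have h2 : ∑ δ ∈ SP, (ca L δ - (fun _ => (0:ℤ)) δ) = ∑ δ ∈ SP, ca L δ := by
              simp
            rw [h2]
            omega
          obtain ⟨f, hf0, hfd, hfk⟩ := D.chain SP β hSP hβS hβP (D.ht (a L) - 1).toNat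
            (fun _ => 0) (ca L) hbnd hdL ⟨β, hβR, hb0⟩
            ⟨a L, D.Rpos_subset _ (haPos L le_rfl), (haC L le_rfl).2⟩
          set k := (h - 1).toNat with hkdef
          have hkd : k ≤ (D.ht (a L) - 1).toNat := by omega
          obtain ⟨hbk, hsumk, s, hsR, hsc⟩ := hfk k hkd
          set cc : V → ℤ := fun x => if x ∈ SP then f k x else 0 with hccdef
          have hccnn : ∀ δ, 0 ≤ cc δ := by
            intro δ
            by_cases hδ : δ ∈ SP
            · simp only [hccdef, if_pos hδ]; exact (hbk δ hδ).1
            · simp [hccdef, hδ]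
          have hsvcc : D.sval SP β cc = D.sval SP β (f k) :=
            D.sval_congr SP β (fun δ hδ => by simp [hccdef, hδ])
          have hsPos : s ∈ D.Rpos := D.pos_of_coroot_eq SP β hSP hβS hβP hsR hsc
          have hhts : D.ht s = h := by
            rw [D.ht_eq' SP β hSP hβS hβP hsPos hsc, hsumk]
            have hz : ∑ δ ∈ SP, (fun _ => (0:ℤ)) δ = 0 := by simp
            rw [hz]
            omega
          refine ⟨s, cc, fun _ _ => ⟨hsPos, hccnn, hsc.trans hsvcc.symm, hhts, ?_⟩⟩
          intro j hj hjh
          exact absurd ⟨j, hj, hjh⟩ hex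
        · exact ⟨β, fun _ => 0, fun h1 h2 => absurd ⟨h1, h2⟩ hh⟩
    choose rr ccf hkey using claim
    refine ⟨(D.ht (a L) - 1).toNat, fun i => rr ((i:ℤ)+1), fun i => ccf ((i:ℤ)+1),
      ?_, ?_, ?_, ?_, ?_, ?_⟩
    · -- a' 0 = β
      have h1 : ((0:ℕ):ℤ) + 1 = 1 := by norm_num
      show rr (((0:ℕ):ℤ) + 1) = β
      rw [h1]
      have := (hkey 1 le_rfl hL1).2.2.2.2 0 (Nat.zero_le L) hh0
      rw [this, ha0]
    · intro i hi
      have hle : ((i:ℕ):ℤ) + 1 ≤ D.ht (a L) := by omega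
      exact (hkey _ (by omega) hle).1
    · intro i hi
      have hle : ((i:ℕ):ℤ) + 1 ≤ D.ht (a L) := by omega
      exact ⟨(hkey _ (by omega) hle).2.1, (hkey _ (by omega) hle).2.2.1⟩
    · intro i hi
      have hle : ((i:ℕ):ℤ) + 1 ≤ D.ht (a L) := by omega
      exact (hkey _ (by omega) hle).2.2.2.1
    · have hle : (((D.ht (a L) - 1).toNat : ℕ):ℤ) + 1 ≤ D.ht (a L) := by omega
      have := (hkey _ (by omega) hle).2.2.2.1
      rw [this]
      omega
    · intro i hi
      refine ⟨(D.ht (a i) - 1).toNat, ?_, ?_⟩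
      · have := hmono i hi
        have := hlow i hi
        omega
      · have harg : (((D.ht (a i) - 1).toNat : ℕ) : ℤ) + 1 = D.ht (a i) := by
          have := hlow i hi; omega
        show rr ((((D.ht (a i) - 1).toNat : ℕ) : ℤ) + 1) = a i
        rw [harg]
        exact (hkey _ (hlow i hi) (hmono i hi)).2.2.2.2 i hi rfl
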